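/- Fourier transform expression for the coherent term: Let σ = e^{−βH}/tr(e^{−βH}) be the Gibbs state of a Hermitian matrix H at inverse temperature β > 0, let P be Hermitian, and let G^P be the coherent term defined in the eigenbasis of σ (eigenvalues σ_i) by G^P_{ij} = −i·((σ_i^{1/2} − σ_j^{1/2})/(2·σ_i^{1/4}·σ_j^{1/4}·(σ_i^{1/2} + σ_j^{1/2})))·Σ_k σ_k^{1/2} P_{ik} P_{kj}. Then G^P = ∫_{−∞}^{∞} e^{iHω}·((1/(2i))·[P σ^{1/2} P, σ^{−1/2}])·e^{−iHω}·f(ω) dω, where f(ω) = 1/(β·cosh(2πω/β)). -/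

import Mathlib

open scoped BigOperators
open Classical
open scoped ComplexOrder

noncomputable section

/-- Index type for the standard basis of the `n`-qubit Hilbert space `(ℂ²)^{⊗n}`. -/
abbrev QIdx (n : ℕ) := Fin n → Fin 2

/-- Operators (matrices) on the `n`-qubit Hilbert space `(ℂ²)^{⊗n}`. -/
abbrev QMat (n : ℕ) := Matrix (QIdx n) (QIdx n) ℂ

/-- The trace norm (Schatten 1-norm) of a matrix: `‖A‖₁ = tr √(AᴴA)`. -/
noncomputable def traceNorm {I : Type} [Fintype I] [DecidableEq I] (A : Matrix I I ℂ) : ℝ :=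
  (let hA := (Matrix.posSemidef_conjTranspose_mul_self A).1
   (hA.eigenvectorUnitary : Matrix I I ℂ) *
     Matrix.diagonal (fun i => ((Real.sqrt (hA.eigenvalues i) : ℝ) : ℂ)) *
     (star hA.eigenvectorUnitary : Matrix I I ℂ)).trace.re

/-- The operator norm (spectral norm) of a complex matrix. -/
noncomputable def opNorm {I : Type} [Fintype I] [DecidableEq I] (A : Matrix I I ℂ) : ℝ :=
  ‖Matrix.toEuclideanCLM (𝕜 := ℂ) A‖

/-- The partial trace of an `n`-qubit operator over the qubit at site `i`, as an operator
on the remaining qubits. -/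
noncomputable def ptraceSite {n : ℕ} (i : Fin n) (X : QMat n) :
    Matrix ({j : Fin n // j ≠ i} → Fin 2) ({j : Fin n // j ≠ i} → Fin 2) ℂ :=
  fun a b => ∑ s : Fin 2,
    X (fun j => if h : j = i then s else a ⟨j, h⟩) (fun j => if h : j = i then s else b ⟨j, h⟩)

/-- A transport plan for a (traceless Hermitian) operator `X`: a decomposition
`X = Σ_i X_i` into Hermitian matrices with `tr_i(X_i) = 0`. -/
structure IsTransportPlan {n : ℕ} (X : QMat n) (Xs : Fin n → QMat n) : Prop where
  herm : ∀ i, (Xs i).IsHermitian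
  traceless : ∀ i, (Xs i).trace = 0
  sum_eq : ∑ i, Xs i = X
  ptrace_eq : ∀ i, ptraceSite i (Xs i) = 0

/-- The quantum Wasserstein norm of order 1 of De Palma–Marvian–Trevisan–Lloyd. -/
noncomputable def wnorm {n : ℕ} (X : QMat n) : ℝ :=
  sInf {c : ℝ | ∃ Xs : Fin n → QMat n, IsTransportPlan X Xs ∧ c = ∑ i, traceNorm (Xs i) / 2}

/-- A density matrix: positive semidefinite with unit trace. -/
def IsDensity {n : ℕ} (ρ : QMat n) : Prop := ρ.PosSemidef ∧ ρ.trace = 1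

/-- The Dobrushin influence matrix of a map `Φ = Φ₁ + ⋯ + Φ_n`:
`D_{ij} = max { ‖Φ_i(ρ − ϱ)‖_{W1} : ρ, ϱ density matrices with tr_j(ρ − ϱ) = 0 }`. -/
noncomputable def dobrushin {n : ℕ} (Φs : Fin n → (QMat n → QMat n)) :
    Matrix (Fin n) (Fin n) ℝ :=
  fun i j => sSup {w : ℝ | ∃ ρ ϱ : QMat n, IsDensity ρ ∧ IsDensity ϱ ∧
    ptraceSite j (ρ - ϱ) = 0 ∧ w = wnorm (Φs i (ρ - ϱ))}

/-- The `1 → 1` norm of a real matrix: the maximum column `ℓ₁`-norm. -/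
noncomputable def norm11 {n : ℕ} (D : Matrix (Fin n) (Fin n) ℝ) : ℝ :=
  ⨆ j, ∑ i, |D i j|

/-- `Q` is an update matrix for `Φ` if `Φ` maps any transport plan with cost vector `x`
to a transport plan with cost vector entrywise at most `Q x`. -/
def IsUpdateMatrix {n : ℕ} (Q : Matrix (Fin n) (Fin n) ℝ) (Φ : QMat n → QMat n) : Prop :=
  ∀ (X : QMat n) (Xs : Fin n → QMat n), IsTransportPlan X Xs →
    ∃ Ys : Fin n → QMat n, IsTransportPlan (Φ X) Ys ∧
      ∀ j, traceNorm (Ys j) / 2 ≤ Q.mulVec (fun i => traceNorm (Xs i) / 2) j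

/-! ### Hamiltonian combinatorics -/

/-- `M` is supported on the set of qubits `S` (i.e. `M = M_S ⊗ Id`). -/
def SupportedOn {n : ℕ} (S : Finset (Fin n)) (M : QMat n) : Prop :=
  (∀ a b : QIdx n, (∃ j, j ∉ S ∧ a j ≠ b j) → M a b = 0) ∧
  (∀ a b a' b' : QIdx n, (∀ j ∈ S, a j = a' j) → (∀ j ∈ S, b j = b' j) →
     (∀ j ∉ S, a j = b j) → (∀ j ∉ S, a' j = b' j) → M a b = M a' b')

/-- The support of an operator: the minimal set of qubits on which it acts nontrivially. -/
noncomputable def supp {n : ℕ} (M : QMat n) : Finset (Fin n) :=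
  (Finset.univ.filter fun S : Finset (Fin n) => SupportedOn S M).inf id

/-- The interaction graph of a local Hamiltonian: two distinct sites are adjacent iff
some term's support contains both. -/
def interGraph {n m : ℕ} (Hterm : Fin m → QMat n) : SimpleGraph (Fin n) where
  Adj i j := i ≠ j ∧ ∃ a, i ∈ supp (Hterm a) ∧ j ∈ supp (Hterm a)
  symm := by
    constructor
    rintro i j ⟨hij, a, hi, hj⟩
    exact ⟨hij.symm, a, hj, hi⟩
  loopless := by
    constructor
    rintro i ⟨hii, -⟩
    exact hii rfl

/-- The graph distance on sites induced by the interaction hypergraph. -/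
noncomputable def hamDist {n m : ℕ} (Hterm : Fin m → QMat n) (i j : Fin n) : ℕ :=
  (interGraph Hterm).dist i j

/-- The ball of radius `r` around site `i` in the interaction graph distance. -/
noncomputable def ballH {n m : ℕ} (Hterm : Fin m → QMat n) (i : Fin n) (r : ℕ) :
    Finset (Fin n) :=
  Finset.univ.filter fun j => hamDist Hterm i j ≤ r

/-- Distance from a site to a set of sites. -/
noncomputable def distToSet {n m : ℕ} (Hterm : Fin m → QMat n) (j : Fin n)
    (S : Finset (Fin n)) : ℕ :=
  sInf {r : ℕ | ∃ i ∈ S, hamDist Hterm j i = r}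

/-- Distance between two sets of sites. -/
noncomputable def setDist {n m : ℕ} (Hterm : Fin m → QMat n) (S T : Finset (Fin n)) : ℕ :=
  sInf {r : ℕ | ∃ i ∈ S, ∃ j ∈ T, hamDist Hterm i j = r}

/-- For `S ⊆ [n]`, the real matrix `E_S` with `(E_S)_{uv} = 1` iff `u, v ∈ S`. -/
def ESet {n : ℕ} (S : Finset (Fin n)) : Matrix (Fin n) (Fin n) ℝ :=
  fun u v => if u ∈ S ∧ v ∈ S then 1 else 0

/-- `S_a`: the union of the supports of the terms appearing in the sequence `a`. -/
noncomputable def SOf {n m : ℕ} (Hterm : Fin m → QMat n) {s : ℕ} (a : Fin s → Fin m) :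
    Finset (Fin n) :=
  Finset.univ.biUnion fun ℓ => supp (Hterm (a ℓ))

/-- `a` is a cluster from the set `S₀`: each term's support intersects `S₀` together with
the supports of the previous terms. -/
def IsClusterFrom {n m : ℕ} (Hterm : Fin m → QMat n) (S0 : Finset (Fin n)) {s : ℕ}
    (a : Fin s → Fin m) : Prop :=
  ∀ ℓ : Fin s, ∃ j ∈ supp (Hterm (a ℓ)),
    j ∈ S0 ∨ ∃ p : Fin s, p < ℓ ∧ j ∈ supp (Hterm (a p))

/-- The ball of radius `r` around a set of sites. -/
noncomputable def ballOfSet {n m : ℕ} (Hterm : Fin m → QMat n) (S : Finset (Fin n)) (r : ℕ) :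
    Finset (Fin n) :=
  Finset.univ.filter fun j => distToSet Hterm j S ≤ r

/-! ### Matrix exponentials, Gibbs states, and the balanced Lindbladian -/

/-- The matrix exponential, via its power series. -/
noncomputable def mexp {I : Type} [Fintype I] [DecidableEq I] (A : Matrix I I ℂ) :
    Matrix I I ℂ :=
  ∑' k : ℕ, ((k.factorial : ℂ)⁻¹ • A ^ k)

/-- The Gibbs state `σ = e^{−βH} / tr(e^{−βH})` at inverse temperature `β`. -/
noncomputable def gibbs {I : Type} [Fintype I] [DecidableEq I] (β : ℝ) (H : Matrix I I ℂ) :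
    Matrix I I ℂ :=
  (mexp ((-β : ℂ) • H)).trace⁻¹ • mexp ((-β : ℂ) • H)

/-- The real power `A^r` of a Hermitian matrix, via its spectral decomposition. -/
noncomputable def hermPow {I : Type} [Fintype I] [DecidableEq I] (A : Matrix I I ℂ) (r : ℝ) :
    Matrix I I ℂ :=
  if h : A.IsHermitian then
    (h.eigenvectorUnitary : Matrix I I ℂ) *
      Matrix.diagonal (fun i => ((h.eigenvalues i ^ r : ℝ) : ℂ)) *
      star (h.eigenvectorUnitary : Matrix I I ℂ)
  else 0

/-- The coherent term `G^P` of the balanced Lindbladian, defined in the eigenbasis of `σ`. -/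
noncomputable def coherentG {I : Type} [Fintype I] [DecidableEq I] (σ P : Matrix I I ℂ) :
    Matrix I I ℂ :=
  if h : σ.IsHermitian then
    let U : Matrix I I ℂ := h.eigenvectorUnitary
    let lam : I → ℝ := h.eigenvalues
    let P' : Matrix I I ℂ := star U * P * U
    let w : I → I → ℝ := fun i j =>
      (lam i ^ ((1:ℝ)/2) - lam j ^ ((1:ℝ)/2)) /
        (2 * lam i ^ ((1:ℝ)/4) * lam j ^ ((1:ℝ)/4) *
          (lam i ^ ((1:ℝ)/2) + lam j ^ ((1:ℝ)/2)))
    let G' : Matrix I I ℂ := Matrix.of (fun i j =>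
      (-Complex.I) * ((w i j : ℝ) : ℂ) *
        (∑ t, ((lam t ^ ((1:ℝ)/2) : ℝ) : ℂ) * P' i t * P' t j))
    U * G' * star U
  else 0

/-- The jump operator `A^P = σ^{1/4} P σ^{−1/4}`. -/
noncomputable def jumpA {I : Type} [Fintype I] [DecidableEq I] (σ P : Matrix I I ℂ) :
    Matrix I I ℂ :=
  hermPow σ ((1:ℝ)/4) * P * hermPow σ (-((1:ℝ)/4))

/-- The Lindblad generator `ρ ↦ −i[G,ρ] + AρA† − ½{A†A, ρ}` as a linear endomorphism. -/
noncomputable def lindbladOp {I : Type} [Fintype I] [DecidableEq I] (G A : Matrix I I ℂ) :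
    Module.End ℂ (Matrix I I ℂ) :=
  (-Complex.I) • (LinearMap.mulLeft ℂ G - LinearMap.mulRight ℂ G)
    + (LinearMap.mulRight ℂ (star A)) ∘ₗ (LinearMap.mulLeft ℂ A)
    - ((1:ℂ)/2) • (LinearMap.mulLeft ℂ (star A * A) + LinearMap.mulRight ℂ (star A * A))

/-- The balanced Lindbladian `L^P` for jump `P` with invariant state `σ`. -/
noncomputable def LP {I : Type} [Fintype I] [DecidableEq I] (σ P : Matrix I I ℂ) :
    Module.End ℂ (Matrix I I ℂ) :=
  lindbladOp (coherentG σ P) (jumpA σ P)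

/-- The three nonidentity single-qubit Pauli matrices. -/
noncomputable def pauli1 : Fin 3 → Matrix (Fin 2) (Fin 2) ℂ :=
  ![!![0, 1; 1, 0], !![0, -Complex.I; Complex.I, 0], !![1, 0; 0, -1]]

/-- The Pauli matrix `σ_p` acting at site `j` of an `n`-qubit system. -/
noncomputable def pauliAt {n : ℕ} (j : Fin n) (p : Fin 3) : QMat n :=
  fun a b => (if ∀ l, l ≠ j → a l = b l then 1 else 0) * pauli1 p (a j) (b j)

/-- The site-`j` balanced Lindbladian `L_j* = Σ_{P ∈ P_j} L^P`. -/
noncomputable def siteL {n : ℕ} (σ : QMat n) (j : Fin n) : Module.End ℂ (QMat n) :=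
  ∑ p : Fin 3, LP σ (pauliAt j p)

/-- The balanced Lindbladian `L* = Σ_j L_j*`. -/
noncomputable def fullL {n : ℕ} (σ : QMat n) : Module.End ℂ (QMat n) :=
  ∑ j, siteL σ j

/-- The quantum dynamical semigroup `e^{L}` generated by a Lindbladian, applied to a state. -/
noncomputable def superExp {n : ℕ} (L : Module.End ℂ (QMat n)) (ρ : QMat n) : QMat n :=
  ∑' k : ℕ, ((k.factorial : ℂ)⁻¹ • (L ^ k) ρ)

/-! ### Entropic quantities -/

/-- The von Neumann entropy `S(ρ) = −tr(ρ log ρ)` of a (Hermitian) matrix. -/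
noncomputable def vnEntropy {I : Type} [Fintype I] [DecidableEq I] (ρ : Matrix I I ℂ) : ℝ :=
  if h : ρ.IsHermitian then -∑ i, h.eigenvalues i * Real.log (h.eigenvalues i) else 0

/-- The reduced operator on the subsystem `S`: the partial trace over the complement of `S`. -/
noncomputable def reduceTo {n : ℕ} (S : Finset (Fin n)) (X : QMat n) :
    Matrix ({j : Fin n // j ∈ S} → Fin 2) ({j : Fin n // j ∈ S} → Fin 2) ℂ :=
  fun a b => ∑ c : {j : Fin n // j ∉ S} → Fin 2,
    X (fun j => if h : j ∈ S then a ⟨j, h⟩ else c ⟨j, h⟩)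
      (fun j => if h : j ∈ S then b ⟨j, h⟩ else c ⟨j, h⟩)

section AuxFourierCoherent
open MeasureTheory Real Set

lemma sech_fourier (b : ℝ) (hb : 0 < b) (a : ℝ) :
    Integrable (fun ω : ℝ => Complex.exp (Complex.I * a * ω) / (Real.cosh (b * ω) : ℂ)) ∧
    (∫ ω : ℝ, Complex.exp (Complex.I * a * ω) / (Real.cosh (b * ω) : ℂ))
      = ((Real.pi / b : ℝ) : ℂ) / ((Real.cosh (Real.pi * a / (2 * b)) : ℝ) : ℂ) := by
  set s : ℂ := ((a / (2 * b) : ℝ) : ℂ) * Complex.I with hs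
  set u : ℂ := 1 / 2 + s with hu
  set v : ℂ := 1 / 2 - s with hv
  have hure : u.re = 1 / 2 := by simp [hu, hs, -Complex.ofReal_div]
  have hvre : v.re = 1 / 2 := by simp [hv, hs, -Complex.ofReal_div]
  have hupos : 0 < u.re := by rw [hure]; norm_num
  have hvpos : 0 < v.re := by rw [hvre]; norm_num
  -- the substitution
  set f : ℝ → ℝ := fun ω => (1 + Real.exp (-(2 * b * ω)))⁻¹ with hf
  set f' : ℝ → ℝ := fun ω => 2 * b * Real.exp (-(2 * b * ω)) * ((1 + Real.exp (-(2 * b * ω)))^2)⁻¹ with hf'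
  have hEpos : ∀ ω : ℝ, 0 < 1 + Real.exp (-(2 * b * ω)) := fun ω => by positivity
  have hderiv : ∀ ω : ℝ, HasDerivAt f (f' ω) ω := by
    intro ω
    have h1 : HasDerivAt (fun ω : ℝ => -(2 * b * ω)) (-(2 * b)) ω := by
      simpa using ((hasDerivAt_id ω).const_mul (2 * b)).fun_neg
    have h2 : HasDerivAt (fun ω : ℝ => 1 + Real.exp (-(2 * b * ω)))
        (Real.exp (-(2 * b * ω)) * (-(2 * b))) ω := ((h1.exp)).const_add 1
    have h3 : HasDerivAt f (-(Real.exp (-(2 * b * ω)) * (-(2 * b))) / (1 + Real.exp (-(2 * b * ω))) ^ 2) ω :=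
      h2.inv (ne_of_gt (hEpos ω))
    convert h3 using 1
    simp only [hf', div_eq_mul_inv]
    ring
  have hmono : StrictMono f := by
    intro x y hxy
    have : Real.exp (-(2 * b * y)) < Real.exp (-(2 * b * x)) := by
      apply Real.exp_lt_exp.2; nlinarith
    exact inv_strictAnti₀ (hEpos y) (by linarith)
  have hinj : Set.InjOn f Set.univ := fun x _ y _ h => hmono.injective h
  have himg : f '' Set.univ = Set.Ioo 0 1 := by
    rw [Set.image_univ]
    ext x
    constructor
    · rintro ⟨ω, rfl⟩
      constructor
      · exact inv_pos.2 (hEpos ω)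
      · rw [inv_lt_one_iff₀]
        right
        have := Real.exp_pos (-(2 * b * ω)); linarith
    · rintro ⟨hx0, hx1⟩
      refine ⟨Real.log (x⁻¹ - 1) / (-(2 * b)), ?_⟩
      have hpos : 0 < x⁻¹ - 1 := by
        have : 1 < x⁻¹ := (one_lt_inv_iff₀).2 ⟨hx0, hx1⟩
        linarith
      simp only [hf]
      rw [show -(2 * b * (Real.log (x⁻¹ - 1) / (-(2 * b)))) = Real.log (x⁻¹ - 1) by
        field_simp]
      rw [Real.exp_log hpos]
      field_simp
      ring
  set g : ℝ → ℂ := fun x => (x:ℂ)^(u-1) * (1-(x:ℂ))^(v-1) with hg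
  have key : ∀ ω : ℝ, |f' ω| • g (f ω)
      = b • (Complex.exp (Complex.I * a * ω) / (Real.cosh (b * ω) : ℂ)) := by
    intro ω
    have hE : (0:ℝ) < Real.exp (-(2*b*ω)) := Real.exp_pos _
    set E := Real.exp (-(2*b*ω)) with hEdef
    have h1E : (0:ℝ) < 1 + E := by linarith
    have hx : f ω = (1+E)⁻¹ := rfl
    have hx0 : (0:ℝ) < f ω := inv_pos.2 h1E
    have h1x : 1 - f ω = E * (1+E)⁻¹ := by rw [hx]; field_simp; ring
    have h1x0 : (0:ℝ) < 1 - f ω := by rw [h1x]; positivity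
    have hlogx : Real.log (f ω) = -Real.log (1+E) := by rw [hx, Real.log_inv]
    have hlog1x : Real.log (1 - f ω) = -(2*b*ω) - Real.log (1+E) := by
      rw [h1x, Real.log_mul (ne_of_gt hE) (by positivity), Real.log_inv, hEdef, Real.log_exp]
      ring
    have habs : |f' ω| = 2*b*E*((1+E)^2)⁻¹ := abs_of_pos (by positivity)
    have c1 : ((f ω : ℝ):ℂ)^(u-1) = Complex.exp (((Real.log (f ω) : ℝ):ℂ) * (u-1)) := by
      rw [Complex.cpow_def_of_ne_zero (by exact_mod_cast ne_of_gt hx0),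
        Complex.ofReal_log hx0.le]
    have c2 : ((1:ℂ) - ((f ω : ℝ):ℂ)) = ((1 - f ω : ℝ) : ℂ) := by push_cast; ring
    have c3 : ((1:ℂ) - ((f ω : ℝ):ℂ))^(v-1)
        = Complex.exp (((Real.log (1 - f ω) : ℝ):ℂ) * (v-1)) := by
      rw [c2, Complex.cpow_def_of_ne_zero (by exact_mod_cast ne_of_gt h1x0),
        Complex.ofReal_log h1x0.le]
    have hexpo : ((Real.log (f ω) : ℝ):ℂ) * (u-1) + ((Real.log (1 - f ω) : ℝ):ℂ) * (v-1)
        = Complex.I * a * ω + ((Real.log (1+E) : ℝ):ℂ) + ((b*ω : ℝ):ℂ) := by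
      rw [hlogx, hlog1x, hu, hv, hs]
      have hbne : ((b:ℝ):ℂ) ≠ 0 := by exact_mod_cast ne_of_gt hb
      push_cast
      field_simp
      ring
    have hgval : g (f ω) = Complex.exp (Complex.I * a * ω) * ((1+E : ℝ):ℂ)
        * ((Real.exp (b*ω) : ℝ):ℂ) := by
      rw [hg]
      simp only []
      rw [c1, c3, ← Complex.exp_add, hexpo, Complex.exp_add, Complex.exp_add,
        ← Complex.ofReal_exp, Real.exp_log h1E, ← Complex.ofReal_exp]
    have hreal : (2*b*E*((1+E)^2)⁻¹) * ((1+E) * Real.exp (b*ω))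
        = b / Real.cosh (b*ω) := by
      rw [Real.cosh_eq, hEdef, show -(2*b*ω) = -(b*ω) + -(b*ω) by ring, Real.exp_add]
      have ht0 : (0:ℝ) < Real.exp (b*ω) := Real.exp_pos _
      rw [Real.exp_neg]
      field_simp
    have hcosh : (0:ℝ) < Real.cosh (b*ω) := Real.cosh_pos _
    rw [hgval, habs]
    simp only [Complex.real_smul]
    rw [show ((2*b*E*((1+E)^2)⁻¹ : ℝ):ℂ) * (Complex.exp (Complex.I*a*ω) * ((1+E : ℝ):ℂ)
        * ((Real.exp (b*ω) : ℝ):ℂ))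
      = ((2*b*E*((1+E)^2)⁻¹ * ((1+E) * Real.exp (b*ω)) : ℝ) : ℂ) * Complex.exp (Complex.I*a*ω)
        by push_cast; ring, hreal]
    push_cast
    field_simp
  have hderivW : ∀ ω ∈ (Set.univ : Set ℝ), HasDerivWithinAt f (f' ω) Set.univ ω :=
    fun ω _ => (hderiv ω).hasDerivWithinAt
  have hchange : ∫ x in Set.Ioo (0:ℝ) 1, g x = ∫ ω, |f' ω| • g (f ω) := by
    rw [← himg, integral_image_eq_integral_abs_deriv_smul MeasurableSet.univ hderivW hinj g,
      Measure.restrict_univ]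
  have hbeta : ∫ x in Set.Ioo (0:ℝ) 1, g x = Complex.betaIntegral u v := by
    rw [Complex.betaIntegral, intervalIntegral.integral_of_le zero_le_one,
      integral_Ioc_eq_integral_Ioo]
  have hbetaval : Complex.betaIntegral u v
      = (Real.pi : ℂ) / ((Real.cosh (Real.pi * a / (2*b)) : ℝ):ℂ) := by
    have huv : u + v = 1 := by rw [hu, hv]; ring
    have h1 := Complex.Gamma_mul_Gamma_eq_betaIntegral hupos hvpos
    rw [huv, Complex.Gamma_one, one_mul] at h1
    have h2 : 1 - u = v := by rw [hu, hv]; ring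
    have h3 := Complex.Gamma_mul_Gamma_one_sub u
    rw [h2] at h3
    have hsin : Complex.sin ((Real.pi : ℂ) * u) = ((Real.cosh (Real.pi * a/(2*b)) : ℝ):ℂ) := by
      rw [hu, hs]
      rw [show ((Real.pi : ℂ) * ((1:ℂ)/2 + ((a/(2*b):ℝ):ℂ) * Complex.I))
          = (Real.pi : ℂ)/2 + ((Real.pi * a/(2*b) : ℝ):ℂ) * Complex.I by push_cast; ring]
      rw [Complex.sin_add, Complex.sin_pi_div_two, Complex.cos_pi_div_two, Complex.cos_mul_I,
        ← Complex.ofReal_cosh]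
      ring
    rw [← h1, h3, hsin]
  have hint_g : IntegrableOn g (Set.Ioo (0:ℝ) 1) := by
    have h2 : IntegrableOn (fun x:ℝ => (x:ℂ)^(u-1)*(1-(x:ℂ))^(v-1)) (Set.Ioc (0:ℝ) 1) volume := by
      rw [← intervalIntegrable_iff_integrableOn_Ioc_of_le zero_le_one]
      exact Complex.betaIntegral_convergent hupos hvpos
    exact h2.mono_set Set.Ioo_subset_Ioc_self
  have hintb : Integrable (fun ω : ℝ =>
      b • (Complex.exp (Complex.I * a * ω) / (Real.cosh (b * ω) : ℂ))) := by
    have h4 := (integrableOn_image_iff_integrableOn_abs_deriv_smul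
      MeasurableSet.univ hderivW hinj g).1 (by rw [himg]; exact hint_g)
    rw [integrableOn_univ] at h4
    exact h4.congr (Filter.EventuallyEq.of_eq (funext key))
  have hbne : b ≠ 0 := ne_of_gt hb
  have hint : Integrable (fun ω : ℝ =>
      Complex.exp (Complex.I * a * ω) / (Real.cosh (b * ω) : ℂ)) := by
    have h5 := hintb.smul (b⁻¹ : ℝ)
    refine h5.congr (Filter.EventuallyEq.of_eq (funext fun ω => ?_))
    simp only [Pi.smul_apply, smul_smul, Complex.real_smul, Complex.ofReal_inv]
    rw [inv_mul_cancel_left₀ (by exact_mod_cast hbne)]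
  refine ⟨hint, ?_⟩
  have hval : b • ∫ ω : ℝ, Complex.exp (Complex.I * a * ω) / (Real.cosh (b * ω) : ℂ)
      = (Real.pi : ℂ) / ((Real.cosh (Real.pi * a / (2*b)) : ℝ):ℂ) := by
    rw [← integral_smul, ← integral_congr_ae (Filter.EventuallyEq.of_eq (funext key)),
      ← hchange, hbeta, hbetaval]
  have h6 : (∫ ω : ℝ, Complex.exp (Complex.I * a * ω) / (Real.cosh (b * ω) : ℂ))
      = (b⁻¹ : ℝ) • ((Real.pi : ℂ) / ((Real.cosh (Real.pi * a / (2*b)) : ℝ):ℂ)) := by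
    rw [← hval, smul_smul, inv_mul_cancel₀ hbne, one_smul]
  rw [h6, Complex.real_smul]
  push_cast
  ring

lemma gibbs_fourier_scalar (β : ℝ) (hβ : 0 < β) (a : ℝ) :
    Integrable (fun ω : ℝ => ((1 / (β * Real.cosh (2 * Real.pi * ω / β)) : ℝ) : ℂ)
      * Complex.exp (Complex.I * a * ω)) ∧
    (∫ ω : ℝ, ((1 / (β * Real.cosh (2 * Real.pi * ω / β)) : ℝ) : ℂ)
        * Complex.exp (Complex.I * a * ω))
      = (((2 * Real.cosh (β * a / 4))⁻¹ : ℝ) : ℂ) := by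
  have hπ : (0:ℝ) < Real.pi := Real.pi_pos
  set b : ℝ := 2 * Real.pi / β with hbdef
  have hb : 0 < b := by positivity
  obtain ⟨h1, h2⟩ := sech_fourier b hb a
  have hbm : ∀ ω : ℝ, b * ω = 2 * Real.pi * ω / β := by
    intro ω; rw [hbdef]; field_simp
  have hfe : ∀ ω : ℝ, ((1 / (β * Real.cosh (2*Real.pi*ω/β)) : ℝ):ℂ) * Complex.exp (Complex.I*a*ω)
      = (β⁻¹:ℝ) • (Complex.exp (Complex.I*a*ω) / (Real.cosh (b*ω) : ℂ)) := by
    intro ω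
    have hc : ((Real.cosh (b*ω) : ℝ):ℂ) ≠ 0 := by
      exact_mod_cast ne_of_gt (Real.cosh_pos (b*ω))
    rw [hbm ω] at hc ⊢
    rw [Complex.real_smul]
    push_cast
    field_simp
  constructor
  · exact (h1.smul (β⁻¹:ℝ)).congr (Filter.EventuallyEq.of_eq (funext fun ω => (hfe ω).symm))
  · rw [integral_congr_ae (Filter.EventuallyEq.of_eq (funext hfe)), integral_smul, h2]
    have e1 : Real.pi / b = β / 2 := by rw [hbdef]; field_simp
    have e2 : Real.pi * a / (2 * b) = β * a / 4 := by rw [hbdef]; field_simp; ring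
    rw [e1, e2, Complex.real_smul]
    have hc : ((Real.cosh (β*a/4) : ℝ):ℂ) ≠ 0 := by
      exact_mod_cast ne_of_gt (Real.cosh_pos (β*a/4))
    push_cast
    field_simp
    try rw [div_mul_eq_div_div, div_self (by exact_mod_cast ne_of_gt hβ : ((β:ℝ):ℂ) ≠ 0)]

variable {I : Type} [Fintype I] [DecidableEq I]

lemma mexp_eq (A : Matrix I I ℂ) : mexp A = NormedSpace.exp A := by
  rw [NormedSpace.exp_eq_tsum ℂ]
  rfl

lemma mexp_conj_diag (V : Matrix I I ℂ) (hV : V * star V = 1) (hV' : star V * V = 1) (d : I → ℂ) :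
    mexp (V * Matrix.diagonal d * star V) = V * Matrix.diagonal (fun i => Complex.exp (d i)) * star V := by
  rw [mexp_eq]
  have hinv : V⁻¹ = star V := Matrix.inv_eq_right_inv hV
  rw [← hinv, Matrix.exp_conj V _ ⟨⟨V, star V, hV, hV'⟩, rfl⟩]
  · rw [Matrix.exp_diagonal, hinv]
    congr 1
    congr 1
    rw [Pi.exp_def, Complex.exp_eq_exp_ℂ]

lemma smul_conj3 (a : ℂ) (A B C : Matrix I I ℂ) :
    a • (A * B * C) = A * (a • B) * C := by
  rw [Matrix.mul_smul, Matrix.smul_mul]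

lemma gibbs_form [Nonempty I] (H : Matrix I I ℂ) (hH : H.IsHermitian) (β : ℝ) :
    ∃ c : ℝ, 0 < c ∧
      gibbs β H = (hH.eigenvectorUnitary : Matrix I I ℂ) *
        Matrix.diagonal (fun k => ((c⁻¹ * Real.exp (-(β * hH.eigenvalues k)) : ℝ) : ℂ)) *
        star (hH.eigenvectorUnitary : Matrix I I ℂ) := by
  set W : Matrix I I ℂ := (hH.eigenvectorUnitary : Matrix I I ℂ) with hWdef
  have hW1 : W * star W = 1 := Matrix.mem_unitaryGroup_iff.1 hH.eigenvectorUnitary.2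
  have hW2 : star W * W = 1 := Matrix.mem_unitaryGroup_iff'.1 hH.eigenvectorUnitary.2
  set E := hH.eigenvalues with hEdef
  have h0 : (-β : ℂ) • H = W * Matrix.diagonal (fun k => ((-(β * E k) : ℝ) : ℂ)) * star W := by
    conv_lhs => rw [hH.spectral_theorem, Unitary.conjStarAlgAut_apply]
    rw [smul_conj3]
    congr 2
    rw [← Matrix.diagonal_smul]
    apply congrArg Matrix.diagonal
    funext k
    simp only [Pi.smul_apply, Function.comp_apply, smul_eq_mul, RCLike.ofReal_alg,
      Complex.coe_algebraMap]
    push_cast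
    ring
  have h1 : mexp ((-β : ℂ) • H)
      = W * Matrix.diagonal (fun k => ((Real.exp (-(β * E k)) : ℝ) : ℂ)) * star W := by
    rw [h0, mexp_conj_diag W hW1 hW2]
    simp only [Complex.ofReal_exp]
  set c : ℝ := ∑ k, Real.exp (-(β * E k)) with hcdef
  have hc : 0 < c := Finset.sum_pos (fun k _ => Real.exp_pos _) Finset.univ_nonempty
  have h2 : (mexp ((-β : ℂ) • H)).trace = (c : ℂ) := by
    rw [h1, Matrix.trace_mul_cycle, hW2, Matrix.one_mul, Matrix.trace_diagonal, hcdef]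
    push_cast
    rfl
  refine ⟨c, hc, ?_⟩
  rw [gibbs, h2, h1, smul_conj3, ← Matrix.diagonal_smul]
  congr 2
  apply congrArg Matrix.diagonal
  funext k
  simp only [Pi.smul_apply, smul_eq_mul]
  push_cast
  ring

lemma cast_diag (f : I → ℝ) :
    Matrix.diagonal (RCLike.ofReal ∘ f) = Matrix.diagonal (fun i => ((f i : ℝ) : ℂ)) := rfl

lemma gibbs_isHermitian [Nonempty I] (H : Matrix I I ℂ) (hH : H.IsHermitian) (β : ℝ) :
    (gibbs β H).IsHermitian := by
  obtain ⟨c, hc, hform⟩ := gibbs_form H hH β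
  rw [hform]
  have hd : (Matrix.diagonal (fun k => ((c⁻¹ * Real.exp (-(β * hH.eigenvalues k)) : ℝ) : ℂ))).IsHermitian :=
    Matrix.isHermitian_diagonal_of_self_adjoint _ (funext fun k => Complex.conj_ofReal _)
  exact Matrix.isHermitian_mul_mul_conjTranspose _ hd

lemma gibbs_key [Nonempty I] (H : Matrix I I ℂ) (hH : H.IsHermitian) (β : ℝ) (hβ : 0 < β)
    (hσ : (gibbs β H).IsHermitian) :
    ∃ ν : I → ℝ,
      H = (hσ.eigenvectorUnitary : Matrix I I ℂ) * Matrix.diagonal (fun i => ((ν i : ℝ) : ℂ)) *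
          star (hσ.eigenvectorUnitary : Matrix I I ℂ) ∧
      (∀ i, 0 < hσ.eigenvalues i) ∧
      (∀ i, hσ.eigenvalues i ^ ((1:ℝ)/2) = (hσ.eigenvalues i ^ ((1:ℝ)/4))^2) ∧
      (∀ i j, Real.cosh (β * (ν i - ν j) / 4)
        = (hσ.eigenvalues i ^ ((1:ℝ)/2) + hσ.eigenvalues j ^ ((1:ℝ)/2))
          / (2 * (hσ.eigenvalues i ^ ((1:ℝ)/4)) * (hσ.eigenvalues j ^ ((1:ℝ)/4)))) := by
  obtain ⟨c, hc, hform⟩ := gibbs_form H hH β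
  set W : Matrix I I ℂ := (hH.eigenvectorUnitary : Matrix I I ℂ) with hWdef
  have hW1 : W * star W = 1 := Matrix.mem_unitaryGroup_iff.1 hH.eigenvectorUnitary.2
  have hW2 : star W * W = 1 := Matrix.mem_unitaryGroup_iff'.1 hH.eigenvectorUnitary.2
  set V : Matrix I I ℂ := (hσ.eigenvectorUnitary : Matrix I I ℂ) with hVdef
  have hV1 : V * star V = 1 := Matrix.mem_unitaryGroup_iff.1 hσ.eigenvectorUnitary.2
  have hV2 : star V * V = 1 := Matrix.mem_unitaryGroup_iff'.1 hσ.eigenvectorUnitary.2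
  set E := hH.eigenvalues with hEdef
  set lam := hσ.eigenvalues with hlamdef
  set wr : I → I → ℝ := fun i j => (lam i ^ ((1:ℝ)/2) - lam j ^ ((1:ℝ)/2)) /
      (2 * lam i ^ ((1:ℝ)/4) * lam j ^ ((1:ℝ)/4) *
        (lam i ^ ((1:ℝ)/2) + lam j ^ ((1:ℝ)/2))) with hwrdef
  set g : I → ℝ := fun k => c⁻¹ * Real.exp (-(β * E k)) with hgdef
  have hgpos : ∀ k, 0 < g k := fun k => by
    have := Real.exp_pos (-(β * E k)); have := hc; positivity
  set D : Matrix I I ℂ := Matrix.diagonal (fun k => ((g k : ℝ) : ℂ)) with hDdef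
  set Λ : Matrix I I ℂ := Matrix.diagonal (fun i => ((lam i : ℝ) : ℂ)) with hΛdef
  have hspecσ : gibbs β H = V * Λ * star V := by
    rw [hσ.spectral_theorem, Unitary.conjStarAlgAut_apply, cast_diag]
  have hformD : gibbs β H = W * D * star W := hform
  set u : Matrix I I ℂ := star W * V with hudef
  have hWu : W * u = V := by rw [hudef, ← Matrix.mul_assoc, hW1, Matrix.one_mul]
  have huu : star u * u = 1 := by
    have hsu : star u = star V * W := by rw [hudef, star_mul, star_star]
    rw [hsu, hudef, Matrix.mul_assoc, ← Matrix.mul_assoc W (star W) V, hW1, Matrix.one_mul, hV2]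
  have hDu : D * u = u * Λ := by
    have e1 : gibbs β H * V = V * Λ := by
      rw [hspecσ, Matrix.mul_assoc (V * Λ) (star V) V, hV2, Matrix.mul_one]
    have e2 : gibbs β H * V = W * (D * u) := by
      rw [hformD, Matrix.mul_assoc (W * D) (star W) V, ← hudef, Matrix.mul_assoc]
    have e3 : W * (D * u) = W * (u * Λ) := by
      rw [← e2, e1, ← hWu, Matrix.mul_assoc]
    have e4 := congrArg (fun M => star W * M) e3
    simpa only [← Matrix.mul_assoc, hW2, Matrix.one_mul] using e4
  have hent : ∀ k i, ((g k : ℝ) : ℂ) * u k i = u k i * ((lam i : ℝ) : ℂ) := by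
    intro k i
    have h := congrArg (fun M : Matrix I I ℂ => M k i) hDu
    simpa [hDdef, hΛdef, Matrix.diagonal_mul, Matrix.mul_diagonal] using h
  have hglam' : ∀ k i, u k i ≠ 0 → g k = lam i := by
    intro k i hk
    have h5 := hent k i
    rw [mul_comm (u k i)] at h5
    exact_mod_cast mul_right_cancel₀ hk h5
  have hcol : ∀ i, ∃ k, u k i ≠ 0 := by
    intro i
    by_contra h
    push_neg at h
    have h0 : (star u * u) i i = 0 := by
      simp [Matrix.mul_apply, Matrix.star_apply, h]
    rw [huu] at h0
    simp [Matrix.one_apply_eq] at h0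
  have hlampos : ∀ i, 0 < lam i := fun i => by
    obtain ⟨k, hk⟩ := hcol i
    rw [← hglam' k i hk]; exact hgpos k
  set ν : I → ℝ := fun i => -(Real.log (c * lam i)) / β with hνdef
  have hexpν : ∀ i, Real.exp (-(β * ν i)) = c * lam i := by
    intro i
    have hpos : 0 < c * lam i := mul_pos hc (hlampos i)
    rw [hνdef]
    rw [show -(β * (-(Real.log (c * lam i)) / β)) = Real.log (c * lam i) by field_simp]
    exact Real.exp_log hpos
  have hEν : ∀ k i, u k i ≠ 0 → E k = ν i := by
    intro k i hk
    have h5 : Real.exp (-(β * E k)) = Real.exp (-(β * ν i)) := by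
      rw [hexpν i, ← hglam' k i hk, hgdef]
      field_simp
    have h6 := Real.exp_injective h5
    have hβ' : β ≠ 0 := ne_of_gt hβ
    field_simp at h6
    exact neg_inj.mp h6
  have hdiagEu : Matrix.diagonal (fun k => ((E k : ℝ) : ℂ)) * u
      = u * Matrix.diagonal (fun i => ((ν i : ℝ) : ℂ)) := by
    ext k i
    simp only [Matrix.diagonal_mul, Matrix.mul_diagonal]
    rcases eq_or_ne (u k i) 0 with h | h
    · rw [h]; ring
    · rw [hEν k i h]; ring
  have hHV : H = V * Matrix.diagonal (fun i => ((ν i : ℝ) : ℂ)) * star V := by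
    have hspecH : H = W * Matrix.diagonal (fun k => ((E k : ℝ) : ℂ)) * star W := by
      rw [hH.spectral_theorem, Unitary.conjStarAlgAut_apply, cast_diag]
    have e1 : H * V = V * Matrix.diagonal (fun i => ((ν i : ℝ) : ℂ)) := by
      rw [hspecH, Matrix.mul_assoc (W * _) (star W) V, ← hudef, Matrix.mul_assoc,
        hdiagEu, ← Matrix.mul_assoc, hWu]
    have : H = H * V * star V := by
      rw [Matrix.mul_assoc, hV1, Matrix.mul_one]
    rw [this, e1]
  have hhalf : ∀ i, lam i ^ ((1:ℝ)/2) = (lam i ^ ((1:ℝ)/4))^2 := by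
    intro i
    rw [← Real.rpow_natCast (lam i ^ ((1:ℝ)/4)) 2, ← Real.rpow_mul (hlampos i).le]
    norm_num
  refine ⟨ν, hHV, hlampos, hhalf, ?_⟩
  intro i j
  have hppos : 0 < lam i ^ ((1:ℝ)/4) := Real.rpow_pos_of_pos (hlampos i) _
  have hqpos : 0 < lam j ^ ((1:ℝ)/4) := Real.rpow_pos_of_pos (hlampos j) _
  set p := lam i ^ ((1:ℝ)/4)
  set q := lam j ^ ((1:ℝ)/4)
  have hc4 : 0 < c ^ ((1:ℝ)/4) := Real.rpow_pos_of_pos hc _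
  have hpe : ∀ t, lam t ^ ((1:ℝ)/4) * c ^ ((1:ℝ)/4) = Real.exp (-(β * ν t)/4) := by
    intro t
    rw [← Real.mul_rpow (hlampos t).le hc.le, mul_comm (lam t) c, ← hexpν t,
      Real.rpow_def_of_pos (Real.exp_pos _), Real.log_exp]
    congr 1
    ring
  have hept : Real.exp (β * (ν i - ν j)/4) * p = q := by
    have h7 : Real.exp (β * (ν i - ν j)/4) * p * c ^ ((1:ℝ)/4) = q * c ^ ((1:ℝ)/4) := by
      rw [mul_assoc, hpe i, hpe j, ← Real.exp_add]
      congr 1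
      ring
    exact mul_right_cancel₀ (ne_of_gt hc4) h7
  have hemt : Real.exp (-(β * (ν i - ν j)/4)) * q = p := by
    have h7 : Real.exp (-(β * (ν i - ν j)/4)) * q * c ^ ((1:ℝ)/4) = p * c ^ ((1:ℝ)/4) := by
      rw [mul_assoc, hpe j, hpe i, ← Real.exp_add]
      congr 1
      ring
    exact mul_right_cancel₀ (ne_of_gt hc4) h7
  rw [Real.cosh_eq]
  have e1 : Real.exp (β * (ν i - ν j)/4) = q / p := by
    rw [← hept]; field_simp
  have e2 : Real.exp (-(β * (ν i - ν j)/4)) = p / q := by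
    rw [← hemt]; field_simp
  rw [e1, e2, hhalf i, hhalf j]
  field_simp
  ring

end AuxFourierCoherent

attribute [local instance] Matrix.normedAddCommGroup Matrix.normedSpace

open MeasureTheory in
/-- **Fourier transform expression for the coherent term**:
`G^P = ∫ e^{iHω} ((1/2i)[P σ^{1/2} P, σ^{−1/2}]) e^{−iHω} f(ω) dω` with
`f(ω) = 1/(β cosh(2πω/β))`. -/
theorem fourier_transform_coherent_term
    (I : Type) [Fintype I] [DecidableEq I]
    (H : Matrix I I ℂ) (hH : H.IsHermitian)
    (β : ℝ) (hβ : 0 < β)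
    (P : Matrix I I ℂ) (hP : P.IsHermitian) :
    coherentG (gibbs β H) P =
      ∫ ω : ℝ, (1 / (β * Real.cosh (2 * Real.pi * ω / β))) •
        (mexp ((Complex.I * (ω : ℂ)) • H) *
          ((2 * Complex.I)⁻¹ •
            (P * hermPow (gibbs β H) ((1:ℝ)/2) * P * hermPow (gibbs β H) (-((1:ℝ)/2))
              - hermPow (gibbs β H) (-((1:ℝ)/2)) * P * hermPow (gibbs β H) ((1:ℝ)/2) * P)) *
          mexp ((-(Complex.I * (ω : ℂ))) • H)) := by
  rcases isEmpty_or_nonempty I with hI | hI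
  · ext i j
    exact hI.elim i
  have hσ := gibbs_isHermitian H hH β
  obtain ⟨ν, hHV, hlampos, hhalf, hcosh⟩ := gibbs_key H hH β hβ hσ
  set V : Matrix I I ℂ := (hσ.eigenvectorUnitary : Matrix I I ℂ) with hVdef
  have hV1 : V * star V = 1 := Matrix.mem_unitaryGroup_iff.1 hσ.eigenvectorUnitary.2
  have hV2 : star V * V = 1 := Matrix.mem_unitaryGroup_iff'.1 hσ.eigenvectorUnitary.2
  set lam := hσ.eigenvalues with hlamdef
  set wr : I → I → ℝ := fun i j => (lam i ^ ((1:ℝ)/2) - lam j ^ ((1:ℝ)/2)) /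
      (2 * lam i ^ ((1:ℝ)/4) * lam j ^ ((1:ℝ)/4) *
        (lam i ^ ((1:ℝ)/2) + lam j ^ ((1:ℝ)/2))) with hwrdef
  have hpow : ∀ r : ℝ, hermPow (gibbs β H) r
      = V * Matrix.diagonal (fun i => ((lam i ^ r : ℝ) : ℂ)) * star V := by
    intro r
    rw [hermPow, dif_pos hσ]
  have hmexp : ∀ θ : ℂ, mexp (θ • H)
      = V * Matrix.diagonal (fun i => Complex.exp (θ * ((ν i : ℝ) : ℂ))) * star V := by
    intro θ
    have h1 : θ • H = V * Matrix.diagonal (fun i => θ * ((ν i : ℝ) : ℂ)) * star V := by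
      conv_lhs => rw [hHV]
      rw [smul_conj3, ← Matrix.diagonal_smul]
      apply congrArg (fun M => V * M * star V)
      apply congrArg Matrix.diagonal
      funext i
      simp [smul_eq_mul]
    rw [h1, mexp_conj_diag V hV1 hV2]
  have hconjmul : ∀ X Y : Matrix I I ℂ,
      (V * X * star V) * (V * Y * star V) = V * (X * Y) * star V := by
    intro X Y
    rw [Matrix.mul_assoc (V * X) (star V) (V * Y * star V),
      ← Matrix.mul_assoc (star V) (V * Y) (star V), ← Matrix.mul_assoc (star V) V Y, hV2,
      Matrix.one_mul, ← Matrix.mul_assoc (V * X) Y (star V), Matrix.mul_assoc V X Y]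
  set P' : Matrix I I ℂ := star V * P * V with hP'def
  have hPconj : P = V * P' * star V := by
    rw [hP'def]
    simp only [Matrix.mul_assoc]
    rw [hV1, Matrix.mul_one, ← Matrix.mul_assoc, hV1, Matrix.one_mul]
  set S : I → I → ℂ := fun i j => ∑ t, ((lam t ^ ((1:ℝ)/2) : ℝ) : ℂ) * P' i t * P' t j
    with hSdef
  set cc : I → I → ℂ := fun i j => (2 * Complex.I)⁻¹ *
      (((lam j ^ (-((1:ℝ)/2)) : ℝ) : ℂ) - ((lam i ^ (-((1:ℝ)/2)) : ℝ) : ℂ)) * S i j with hccdef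
  set Dh : Matrix I I ℂ := Matrix.diagonal (fun i => ((lam i ^ ((1:ℝ)/2) : ℝ) : ℂ)) with hDhdef
  set Dm : Matrix I I ℂ := Matrix.diagonal (fun i => ((lam i ^ (-((1:ℝ)/2)) : ℝ) : ℂ)) with hDmdef
  set N : Matrix I I ℂ := (2 * Complex.I)⁻¹ • (P' * Dh * P' * Dm - Dm * P' * Dh * P') with hNdef
  have hinner : (2 * Complex.I)⁻¹ •
      (P * hermPow (gibbs β H) ((1:ℝ)/2) * P * hermPow (gibbs β H) (-((1:ℝ)/2))
        - hermPow (gibbs β H) (-((1:ℝ)/2)) * P * hermPow (gibbs β H) ((1:ℝ)/2) * P)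
      = V * N * star V := by
    rw [hpow ((1:ℝ)/2), hpow (-((1:ℝ)/2)), ← hDhdef, ← hDmdef]
    conv_lhs => rw [hPconj]
    simp only [hconjmul]
    rw [← Matrix.sub_mul, ← Matrix.mul_sub, smul_conj3, hNdef]
  have hA1 : ∀ i j, (P' * Dh * P' * Dm) i j = ((lam j ^ (-((1:ℝ)/2)) : ℝ) : ℂ) * S i j := by
    intro i j
    rw [show P' * Dh * P' * Dm = (P' * Dh * P') * Dm from rfl, Matrix.mul_diagonal,
      Matrix.mul_apply, hSdef]
    simp only []
    rw [Finset.sum_mul, Finset.mul_sum]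
    refine Finset.sum_congr rfl fun t _ => ?_
    rw [Matrix.mul_diagonal]
    ring
  have hA2 : ∀ i j, (Dm * P' * Dh * P') i j = ((lam i ^ (-((1:ℝ)/2)) : ℝ) : ℂ) * S i j := by
    intro i j
    rw [Matrix.mul_apply, hSdef]
    simp only []
    rw [Finset.mul_sum]
    refine Finset.sum_congr rfl fun t _ => ?_
    rw [Matrix.mul_diagonal, Matrix.diagonal_mul]
    ring
  have hNentry : ∀ i j, N i j = cc i j := by
    intro i j
    rw [hNdef]
    simp only [Matrix.smul_apply, Matrix.sub_apply, smul_eq_mul]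
    rw [hA1, hA2, hccdef]
    ring
  set C : I → I → Matrix I I ℂ := fun i j => V * Matrix.single i j (cc i j) * star V
    with hCdef
  have hKentry : ∀ (ω : ℝ) (i j : I),
      (Matrix.diagonal (fun i => Complex.exp ((Complex.I * (ω:ℂ)) * ((ν i : ℝ):ℂ))) * N *
        Matrix.diagonal (fun i => Complex.exp ((-(Complex.I * (ω:ℂ))) * ((ν i : ℝ):ℂ)))) i j
      = Complex.exp (Complex.I * ((ν i - ν j : ℝ):ℂ) * (ω:ℂ)) * cc i j := by
    intro ω i j
    rw [Matrix.mul_diagonal, Matrix.diagonal_mul, hNentry]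
    rw [show Complex.exp (Complex.I * (ω:ℂ) * ((ν i : ℝ):ℂ)) * cc i j *
        Complex.exp ((-(Complex.I * (ω:ℂ))) * ((ν j : ℝ):ℂ))
      = (Complex.exp (Complex.I * (ω:ℂ) * ((ν i : ℝ):ℂ)) *
         Complex.exp ((-(Complex.I * (ω:ℂ))) * ((ν j : ℝ):ℂ))) * cc i j from by ring]
    rw [← Complex.exp_add]
    congr 2
    push_cast
    ring
  have hintegrand : ∀ ω : ℝ,
      (1 / (β * Real.cosh (2 * Real.pi * ω / β))) •
        (mexp ((Complex.I * (ω : ℂ)) • H) *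
          ((2 * Complex.I)⁻¹ •
            (P * hermPow (gibbs β H) ((1:ℝ)/2) * P * hermPow (gibbs β H) (-((1:ℝ)/2))
              - hermPow (gibbs β H) (-((1:ℝ)/2)) * P * hermPow (gibbs β H) ((1:ℝ)/2) * P)) *
          mexp ((-(Complex.I * (ω : ℂ))) • H))
      = ∑ i, ∑ j, (((1 / (β * Real.cosh (2 * Real.pi * ω / β)) : ℝ):ℂ) *
          Complex.exp (Complex.I * ((ν i - ν j : ℝ):ℂ) * (ω:ℂ))) • C i j := by
    intro ω
    rw [hinner, hmexp (Complex.I * (ω:ℂ)), hmexp (-(Complex.I * (ω:ℂ))), hconjmul, hconjmul]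
    have hK : Matrix.diagonal (fun i => Complex.exp ((Complex.I * (ω:ℂ)) * ((ν i : ℝ):ℂ))) * N *
        Matrix.diagonal (fun i => Complex.exp ((-(Complex.I * (ω:ℂ))) * ((ν i : ℝ):ℂ)))
      = ∑ i, ∑ j, Complex.exp (Complex.I * ((ν i - ν j : ℝ):ℂ) * (ω:ℂ)) •
          Matrix.single i j (cc i j) := by
      conv_lhs => rw [Matrix.matrix_eq_sum_single
        (Matrix.diagonal (fun i => Complex.exp ((Complex.I * (ω:ℂ)) * ((ν i : ℝ):ℂ))) * N *
          Matrix.diagonal (fun i => Complex.exp ((-(Complex.I * (ω:ℂ))) * ((ν i : ℝ):ℂ))))]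
      refine Finset.sum_congr rfl fun i _ => Finset.sum_congr rfl fun j _ => ?_
      rw [hKentry ω i j, Matrix.smul_single, smul_eq_mul]
    rw [hK]
    simp only [Finset.mul_sum, Finset.sum_mul, Finset.smul_sum, Matrix.mul_smul,
      Matrix.smul_mul, ← smul_assoc, Complex.real_smul]
    rfl
  have hgInt : ∀ a : ℝ, Integrable (fun ω : ℝ =>
      ((1 / (β * Real.cosh (2 * Real.pi * ω / β)) : ℝ) : ℂ) *
        Complex.exp (Complex.I * (a:ℂ) * (ω:ℂ))) := fun a => (gibbs_fourier_scalar β hβ a).1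
  have hgVal : ∀ a : ℝ, (∫ ω : ℝ, ((1 / (β * Real.cosh (2 * Real.pi * ω / β)) : ℝ) : ℂ) *
        Complex.exp (Complex.I * (a:ℂ) * (ω:ℂ)))
      = (((2 * Real.cosh (β * a / 4))⁻¹ : ℝ) : ℂ) := fun a => (gibbs_fourier_scalar β hβ a).2
  have hIntStep : (∫ ω : ℝ, (1 / (β * Real.cosh (2 * Real.pi * ω / β))) •
        (mexp ((Complex.I * (ω : ℂ)) • H) *
          ((2 * Complex.I)⁻¹ •
            (P * hermPow (gibbs β H) ((1:ℝ)/2) * P * hermPow (gibbs β H) (-((1:ℝ)/2))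
              - hermPow (gibbs β H) (-((1:ℝ)/2)) * P * hermPow (gibbs β H) ((1:ℝ)/2) * P)) *
          mexp ((-(Complex.I * (ω : ℂ))) • H)))
      = ∑ i, ∑ j, ((((2 * Real.cosh (β * (ν i - ν j) / 4))⁻¹ : ℝ) : ℂ)) • C i j := by
    rw [integral_congr_ae (Filter.EventuallyEq.of_eq (funext hintegrand))]
    rw [integral_finset_sum _ (fun i _ => integrable_finset_sum _
      (fun j _ => (hgInt (ν i - ν j)).smul_const (C i j)))]
    refine Finset.sum_congr rfl fun i _ => ?_
    rw [integral_finset_sum _ (fun j _ => (hgInt (ν i - ν j)).smul_const (C i j))]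
    refine Finset.sum_congr rfl fun j _ => ?_
    rw [integral_smul_const, hgVal]
  rw [hIntStep]
  have hfinal : ∀ i j : I, (((2 * Real.cosh (β * (ν i - ν j) / 4))⁻¹ : ℝ) : ℂ) * cc i j
      = (-Complex.I) * ((wr i j : ℝ) : ℂ) * S i j := by
    intro i j
    have hneg : ∀ t, lam t ^ (-((1:ℝ)/2)) = (lam t ^ ((1:ℝ)/2))⁻¹ :=
      fun t => Real.rpow_neg (hlampos t).le _
    have hp : 0 < lam i ^ ((1:ℝ)/4) := Real.rpow_pos_of_pos (hlampos i) _
    have hq : 0 < lam j ^ ((1:ℝ)/4) := Real.rpow_pos_of_pos (hlampos j) _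
    have hrw : (2 * Real.cosh (β * (ν i - ν j) / 4))⁻¹ *
        (lam j ^ (-((1:ℝ)/2)) - lam i ^ (-((1:ℝ)/2)))
        = 2 * wr i j := by
      rw [hcosh i j, hneg, hneg, hwrdef]
      simp only []
      rw [hhalf i, hhalf j]
      have hXY : 0 < (lam i ^ ((1:ℝ)/4))^2 + (lam j ^ ((1:ℝ)/4))^2 := by positivity
      field_simp
    have h2I : ((2:ℂ) * Complex.I)⁻¹ = -(Complex.I)/2 := by
      rw [mul_inv, Complex.inv_I]
      ring
    have hcoef : (((2 * Real.cosh (β * (ν i - ν j) / 4))⁻¹ : ℝ) : ℂ) *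
        ((2 * Complex.I)⁻¹ * (((lam j ^ (-((1:ℝ)/2)) : ℝ) : ℂ) - ((lam i ^ (-((1:ℝ)/2)) : ℝ) : ℂ)))
        = (-Complex.I) * ((wr i j : ℝ) : ℂ) := by
      rw [h2I]
      rw [show (((2 * Real.cosh (β * (ν i - ν j) / 4))⁻¹ : ℝ) : ℂ) *
          (-(Complex.I)/2 * (((lam j ^ (-((1:ℝ)/2)) : ℝ) : ℂ) - ((lam i ^ (-((1:ℝ)/2)) : ℝ) : ℂ)))
        = (-Complex.I) * ((((2 * Real.cosh (β * (ν i - ν j) / 4))⁻¹ *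
            (lam j ^ (-((1:ℝ)/2)) - lam i ^ (-((1:ℝ)/2))) : ℝ) : ℂ) / 2) from by push_cast; ring]
      rw [hrw]
      push_cast
      ring
    rw [hccdef]
    simp only []
    rw [← mul_assoc, hcoef]
  have hRHS : ∑ i, ∑ j, ((((2 * Real.cosh (β * (ν i - ν j) / 4))⁻¹ : ℝ) : ℂ)) • C i j
      = V * (∑ i : I, ∑ j : I, Matrix.single i j
          ((((2 * Real.cosh (β * (ν i - ν j) / 4))⁻¹ : ℝ) : ℂ) * cc i j)) * star V := by
    simp only [Finset.mul_sum, Finset.sum_mul]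
    refine Finset.sum_congr rfl fun i _ => Finset.sum_congr rfl fun j _ => ?_
    rw [hCdef]
    simp only []
    rw [smul_conj3, Matrix.smul_single, smul_eq_mul]
  rw [hRHS]
  have hsum : (∑ i : I, ∑ j : I, Matrix.single i j
        ((((2 * Real.cosh (β * (ν i - ν j) / 4))⁻¹ : ℝ) : ℂ) * cc i j))
      = Matrix.of (fun i j => (-Complex.I) * ((wr i j : ℝ) : ℂ) * S i j) := by
    conv_rhs => rw [Matrix.matrix_eq_sum_single (Matrix.of _)]
    refine Finset.sum_congr rfl fun i _ => Finset.sum_congr rfl fun j _ => ?_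
    rw [hfinal i j]
    rfl
  rw [hsum]
  simp only [coherentG]
  rw [dif_pos hσ]


end
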